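/- For every natural number n ≥ 1, the number of pairs (x,y) of integers with x² + 2y² = n equals 2(d₁,₈(n) + d₃,₈(n) − d₅,₈(n) − d₇,₈(n)), where d_{j,8}(n) is the number of positive divisors d of n with d ≡ j (mod 8). -/

import Mathlib

open Zsqrtd
set_option maxHeartbeats 1000000
set_option synthInstance.maxHeartbeats 400000

local notation "R2" => Zsqrtd (-2)

namespace Z2

theorem norm_def' (z : R2) : z.norm = z.re ^ 2 + 2 * z.im ^ 2 := by
  rw [Zsqrtd.norm_def]; ring

theorem norm_nonneg (z : R2) : 0 ≤ z.norm := Zsqrtd.norm_nonneg (by norm_num) z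

theorem norm_pos {z : R2} (h : z ≠ 0) : 0 < z.norm :=
  lt_of_le_of_ne (norm_nonneg z) (fun he => h ((Zsqrtd.norm_eq_zero_iff (by norm_num) z).1 he.symm))

noncomputable instance : Div R2 :=
  ⟨fun x y => ⟨round ((x * star y).re / y.norm : ℚ), round ((x * star y).im / y.norm : ℚ)⟩⟩

theorem div_def (x y : R2) :
    x / y = ⟨round ((x * star y).re / y.norm : ℚ), round ((x * star y).im / y.norm : ℚ)⟩ := rfl

noncomputable instance : Mod R2 := ⟨fun x y => x - y * (x / y)⟩

theorem mod_def (x y : R2) : x % y = x - y * (x / y) := rfl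

theorem norm_mod_lt (x : R2) {y : R2} (hy : y ≠ 0) : (x % y).norm < y.norm := by
  have hn : (0 : ℤ) < y.norm := norm_pos hy
  have key : (x % y) * star y = x * star y - (x / y) * (y.norm : R2) := by
    rw [mod_def]
    have : (y.norm : R2) = y * star y := Zsqrtd.norm_eq_mul_conj y
    rw [this]; ring
  have hre : ((x % y) * star y).re = (x * star y).re - (x / y).re * y.norm := by
    rw [key]; simp [Zsqrtd.re_sub, Zsqrtd.re_mul, Zsqrtd.re_intCast, Zsqrtd.im_intCast]
  have him : ((x % y) * star y).im = (x * star y).im - (x / y).im * y.norm := by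
    rw [key]; simp [Zsqrtd.im_sub, Zsqrtd.im_mul, Zsqrtd.re_intCast, Zsqrtd.im_intCast]
  -- bounds
  have hb : ∀ a : ℤ, |(a : ℚ) - round ((a : ℚ) / y.norm) * y.norm| ≤ (y.norm : ℚ) / 2 := by
    intro a
    have h2 : (0 : ℚ) < (y.norm : ℚ) := by exact_mod_cast hn
    have := abs_sub_round ((a : ℚ) / y.norm)
    calc |(a : ℚ) - round ((a : ℚ) / y.norm) * y.norm|
        = |(a : ℚ) / y.norm - round ((a : ℚ) / y.norm)| * |(y.norm : ℚ)| := by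
          rw [← abs_mul]; congr 1; field_simp
      _ ≤ (1 / 2) * (y.norm : ℚ) := by
          rw [abs_of_pos h2]
          exact mul_le_mul_of_nonneg_right this (le_of_lt h2)
      _ = (y.norm : ℚ) / 2 := by ring
  have h1 := hb (x * star y).re
  have h2 := hb (x * star y).im
  rw [div_def] at hre him
  -- norm multiplicativity
  have hmul : (x % y).norm * y.norm = ((x % y) * star y).norm := by
    rw [Zsqrtd.norm_mul, Zsqrtd.norm_conj]
  have hq : ((x % y).norm * y.norm : ℚ) < (y.norm : ℚ) * y.norm := by
    have e : (((x % y) * star y).norm : ℚ)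
        = (((x * star y).re : ℚ) - round (((x * star y).re : ℚ) / y.norm) * y.norm) ^ 2
          + 2 * (((x * star y).im : ℚ) - round (((x * star y).im : ℚ) / y.norm) * y.norm) ^ 2 := by
      rw [norm_def']
      push_cast [hre, him]
      ring
    have b1 : (((x * star y).re : ℚ) - round (((x * star y).re : ℚ) / y.norm) * y.norm) ^ 2
        ≤ ((y.norm : ℚ) / 2) ^ 2 := by
      calc _ = |(((x * star y).re : ℚ) - round (((x * star y).re : ℚ) / y.norm) * y.norm)| ^ 2 := by
            rw [sq_abs]
        _ ≤ ((y.norm : ℚ) / 2) ^ 2 := by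
            apply pow_le_pow_left₀ (abs_nonneg _) h1
    have b2 : (((x * star y).im : ℚ) - round (((x * star y).im : ℚ) / y.norm) * y.norm) ^ 2
        ≤ ((y.norm : ℚ) / 2) ^ 2 := by
      calc _ = |(((x * star y).im : ℚ) - round (((x * star y).im : ℚ) / y.norm) * y.norm)| ^ 2 := by
            rw [sq_abs]
        _ ≤ ((y.norm : ℚ) / 2) ^ 2 := by
            apply pow_le_pow_left₀ (abs_nonneg _) h2
    have hnq : (0 : ℚ) < (y.norm : ℚ) := by exact_mod_cast hn
    calc ((x % y).norm * y.norm : ℚ) = (((x % y) * star y).norm : ℚ) := by exact_mod_cast hmul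
      _ = _ := e
      _ ≤ ((y.norm : ℚ) / 2) ^ 2 + 2 * ((y.norm : ℚ) / 2) ^ 2 := by linarith
      _ < (y.norm : ℚ) * y.norm := by nlinarith
  have : (x % y).norm * y.norm < y.norm * y.norm := by exact_mod_cast hq
  exact lt_of_mul_lt_mul_right this (le_of_lt hn)

theorem natAbs_norm_mod_lt (x : R2) {y : R2} (hy : y ≠ 0) :
    (x % y).norm.natAbs < y.norm.natAbs := by
  have := norm_mod_lt x hy
  have h1 := norm_nonneg (x % y)
  have h2 := norm_nonneg y
  omega

noncomputable instance : EuclideanDomain R2 :=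
  { Zsqrtd.commRing, (inferInstance : Nontrivial R2) with
    quotient := (· / ·)
    remainder := (· % ·)
    quotient_zero := fun x => by
      simp [div_def, Zsqrtd.norm_zero]
      rfl
    quotient_mul_add_remainder_eq := fun x y => by show y * (x/y) + (x - y * (x/y)) = x; ring
    r := fun a b => (Int.natAbs ∘ Zsqrtd.norm) a < (Int.natAbs ∘ Zsqrtd.norm) b
    r_wellFounded := (measure (Int.natAbs ∘ Zsqrtd.norm)).wf
    remainder_lt := fun x y hy => natAbs_norm_mod_lt x hy
    mul_left_not_lt := fun a b hb0 => by
      apply not_lt_of_ge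
      show (a.norm.natAbs ≤ (a*b).norm.natAbs)
      rw [Zsqrtd.norm_mul, Int.natAbs_mul]
      exact Nat.le_mul_of_pos_right _ (Int.natAbs_pos.2 fun h => hb0 ((Zsqrtd.norm_eq_zero_iff (by norm_num) b).1 h)) }


theorem norm_eq_one_iff'' {z : R2} : z.norm = 1 ↔ z = 1 ∨ z = -1 := by
  constructor
  · intro h
    rw [norm_def'] at h
    have him : z.im = 0 := by nlinarith [sq_nonneg z.re, sq_nonneg z.im]
    have hre : z.re = 1 ∨ z.re = -1 := by
      have h1 : (z.re - 1) * (z.re + 1) = 0 := by nlinarith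
      rcases mul_eq_zero.1 h1 with h2 | h2
      · left; omega
      · right; omega
    rcases hre with h2 | h2
    · left; ext <;> simp [h2, him]
    · right; ext <;> simp [h2, him]
  · rintro (rfl | rfl) <;> simp [Zsqrtd.norm_def]

theorem isUnit_iff {z : R2} : IsUnit z ↔ z = 1 ∨ z = -1 := by
  rw [← Zsqrtd.norm_eq_one_iff' (by norm_num) z, norm_eq_one_iff'']

theorem norm_dvd_norm {z w : R2} (h : z ∣ w) : z.norm ∣ w.norm := by
  rcases h with ⟨c, rfl⟩; rw [Zsqrtd.norm_mul]; exact dvd_mul_right _ _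

theorem irreducible_of_norm_prime {z : R2} (h : Prime z.norm) : Irreducible z := by
  constructor
  · intro hu
    rw [← Zsqrtd.norm_eq_one_iff' (by norm_num) z] at hu
    rw [hu] at h
    exact h.not_unit isUnit_one
  · intro a b hab
    have hnn : z.norm = a.norm * b.norm := by rw [hab, Zsqrtd.norm_mul]
    rcases h.irreducible.isUnit_or_isUnit hnn with hu | hu
    · left
      rw [← Zsqrtd.norm_eq_one_iff' (by norm_num) a]
      rcases Int.isUnit_iff.1 hu with h1 | h1
      · exact h1
      · exfalso; have := norm_nonneg a; omega
    · right
      rw [← Zsqrtd.norm_eq_one_iff' (by norm_num) b]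
      rcases Int.isUnit_iff.1 hu with h1 | h1
      · exact h1
      · exfalso; have := norm_nonneg b; omega

theorem prime_of_norm_prime {z : R2} (h : Prime z.norm) : Prime z :=
  (_root_.irreducible_iff_prime).1 (irreducible_of_norm_prime h)

theorem star_dvd {a z : R2} (h : a ∣ star z) : star a ∣ z := by
  rcases h with ⟨c, hc⟩
  exact ⟨star c, by rw [← star_star z, hc, star_mul, mul_comm]⟩

theorem exists_norm_eq_of_not_prime {p : ℕ} (hp : p.Prime) (hnp : ¬ Prime (p : R2)) :
    ∃ π : R2, π.norm = p := by
  have h2 : (2 : ℕ) ≤ p := hp.two_le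
  have h0 : (p : R2) ≠ 0 := by
    intro h
    have := congrArg Zsqrtd.re h
    simp at this
    omega
  have hu : ¬ IsUnit (p : R2) := by
    rw [← Zsqrtd.norm_eq_one_iff' (by norm_num) _]
    rw [show ((p:R2)) = ((p:ℕ):R2) from rfl, Zsqrtd.norm_natCast]
    intro h
    nlinarith [h, h2]
  have hni : ¬ Irreducible (p : R2) := fun h =>
    hnp ((_root_.irreducible_iff_prime).1 h)
  rw [irreducible_iff] at hni
  push_neg at hni
  obtain ⟨a, b, hab, hua, hub⟩ := hni hu
  have h3 : a.norm * b.norm = (p : ℤ) * p := by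
    rw [← Zsqrtd.norm_mul, ← hab, Zsqrtd.norm_natCast]
  have hnorm : a.norm.natAbs * b.norm.natAbs = p ^ 2 := by
    rw [← Int.natAbs_mul, h3]
    simp [sq, Int.natAbs_mul]
  have ha1 : a.norm.natAbs ≠ 1 := fun h => hua (Zsqrtd.norm_eq_one_iff.1 h)
  have hb1 : b.norm.natAbs ≠ 1 := fun h => hub (Zsqrtd.norm_eq_one_iff.1 h)
  have := (hp.mul_eq_prime_sq_iff ha1 hb1).1 hnorm
  refine ⟨a, ?_⟩
  have := this.1
  have hnn := norm_nonneg a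
  omega

theorem natCast_dvd_mul_conj {p : ℕ} {z : R2} (hz : (p:ℤ) ∣ z.norm) :
    (p : R2) ∣ z * star z := by
  rw [← Zsqrtd.norm_eq_mul_conj]
  rcases hz with ⟨c, hc⟩
  exact ⟨(c : R2), by rw [hc]; push_cast; ring⟩

theorem exists_prime_divisor {p : ℕ} (hp : p.Prime) {z : R2} (hz : (p:ℤ) ∣ z.norm) :
    (Prime (p : R2) ∧ (p:R2) ∣ z) ∨ ∃ π : R2, π.norm = p ∧ Prime π ∧ π ∣ z := by
  have hmul := natCast_dvd_mul_conj hz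
  by_cases hnp : Prime (p : R2)
  · left
    refine ⟨hnp, ?_⟩
    rcases hnp.2.2 _ _ hmul with h | h
    · exact h
    · have := star_dvd h
      rwa [show star (p : R2) = (p : R2) by ext <;> simp] at this
  · right
    obtain ⟨π₀, hπ₀⟩ := exists_norm_eq_of_not_prime hp hnp
    have hpZ : Prime (p : ℤ) := Nat.prime_iff_prime_int.1 hp
    have hπp : Prime π₀ := prime_of_norm_prime (by rw [hπ₀]; exact hpZ)
    have hdvd : π₀ ∣ z * star z := by
      refine dvd_trans ?_ hmul
      refine ⟨star π₀, ?_⟩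
      have := Zsqrtd.norm_eq_mul_conj π₀
      rw [hπ₀] at this
      exact_mod_cast this
    rcases hπp.2.2 _ _ hdvd with h | h
    · exact ⟨π₀, hπ₀, hπp, h⟩
    · refine ⟨star π₀, by rw [Zsqrtd.norm_conj, hπ₀], ?_, star_dvd h⟩
      exact prime_of_norm_prime (by rw [Zsqrtd.norm_conj, hπ₀]; exact hpZ)


theorem sq_le_bound {a n : ℤ} (hn : 0 ≤ n) (h : a ^ 2 ≤ n) : -n ≤ a ∧ a ≤ n := by
  constructor <;> nlinarith

noncomputable def sols (n : ℕ) : Finset R2 :=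
  ((Finset.Icc (-(n:ℤ)) (n:ℤ) ×ˢ Finset.Icc (-(n:ℤ)) (n:ℤ)).image
    fun p => (⟨p.1, p.2⟩ : R2)).filter fun z => z.norm = (n:ℤ)

theorem mem_sols {n : ℕ} {z : R2} : z ∈ sols n ↔ z.norm = (n:ℤ) := by
  constructor
  · exact fun h => (Finset.mem_filter.1 h).2
  · intro h
    refine Finset.mem_filter.2 ⟨?_, h⟩
    refine Finset.mem_image.2 ⟨(z.re, z.im), ?_, rfl⟩
    rw [norm_def'] at h
    have hnn : (0:ℤ) ≤ (n:ℤ) := Int.natCast_nonneg n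
    have h1 : z.re ^ 2 ≤ (n:ℤ) := by nlinarith [sq_nonneg z.im]
    have h2 : z.im ^ 2 ≤ (n:ℤ) := by nlinarith [sq_nonneg z.re]
    simp only [Finset.mem_product, Finset.mem_Icc]
    exact ⟨sq_le_bound hnn h1, sq_le_bound hnn h2⟩

theorem ne_zero_of_mem_sols {n : ℕ} (hn : 1 ≤ n) {z : R2} (h : z ∈ sols n) : z ≠ 0 := by
  intro h0
  rw [mem_sols, h0, Zsqrtd.norm_zero] at h
  omega

theorem sols_one : sols 1 = ({1, -1} : Finset R2) := by
  ext z
  rw [mem_sols]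
  simp only [Nat.cast_one, Finset.mem_insert, Finset.mem_singleton]
  exact norm_eq_one_iff''

theorem card_sols_one : (sols 1).card = 2 := by
  rw [sols_one]
  rw [Finset.card_insert_of_notMem (by decide), Finset.card_singleton]

theorem exists_factor : ∀ (m : ℕ) {n : ℕ}, Nat.Coprime m n → ∀ {z : R2},
    z.norm = ((m*n : ℕ) : ℤ) → ∃ u v : R2, z = u * v ∧ u.norm = (m:ℤ) ∧ v.norm = (n:ℤ) := by
  intro m
  induction m using Nat.strong_induction_on with
  | _ m ih =>
    intro n hcop z hz
    rcases Nat.eq_zero_or_pos m with rfl | hm0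
    · have hn1 : n = 1 := (Nat.coprime_zero_left n).1 hcop
      subst hn1
      refine ⟨0, 1, ?_, by simp [Zsqrtd.norm_zero], by simp [Zsqrtd.norm_one]⟩
      simp only [Nat.zero_mul, Nat.cast_zero] at hz
      rw [(Zsqrtd.norm_eq_zero_iff (by norm_num) z).1 hz]
      ring
    rcases Nat.lt_or_ge m 2 with hm1 | hm2
    · have : m = 1 := by omega
      subst this
      exact ⟨1, z, by rw [one_mul], by simp [Zsqrtd.norm_one], by rw [hz]; push_cast; ring⟩
    · set p := m.minFac with hp_def
      have hp : p.Prime := Nat.minFac_prime (by omega)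
      have hpm : p ∣ m := Nat.minFac_dvd m
      have hpz : (p : ℤ) ∣ z.norm := by
        rw [hz]
        exact_mod_cast Int.natCast_dvd_natCast.2 (hpm.mul_right n)
      rcases exists_prime_divisor hp hpz with ⟨hpp, c, hc⟩ | ⟨π, hπn, hπp, w, hw⟩
      · -- p prime in R2, z = p * c
        have hpn : ¬ p ∣ n := fun hd => Nat.Prime.one_lt hp |>.ne'
          (Nat.eq_one_of_dvd_one (hcop ▸ Nat.dvd_gcd hpm hd))
        have hp2m : p ^ 2 ∣ m := by
          have h1 : p ^ 2 ∣ m * n := by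
            have : ((p:ℤ))^2 ∣ ((m*n:ℕ):ℤ) := by
              rw [← hz, hc, Zsqrtd.norm_mul]
              rw [show ((p:R2)) = ((p:ℕ):R2) from rfl, Zsqrtd.norm_natCast]
              exact Dvd.intro c.norm (by ring)
            exact_mod_cast Int.natCast_dvd_natCast.1 (by exact_mod_cast this)
          exact (Nat.Coprime.pow_left 2 (Nat.Coprime.coprime_dvd_left hpm hcop)).dvd_of_dvd_mul_right h1
        set m' := m / p ^ 2 with hm'_def
        have hmm : m = p ^ 2 * m' := (Nat.mul_div_cancel' hp2m).symm
        have hp2 : 2 ≤ p := hp.two_le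
        have hq2 : 2 ≤ p ^ 2 := by nlinarith
        have hm'pos : 0 < m' := by
          rcases Nat.eq_zero_or_pos m' with h | h
          · rw [h, Nat.mul_zero] at hmm; omega
          · exact h
        have hm'lt : m' < m := by nlinarith
        have hcop' : Nat.Coprime m' n := Nat.Coprime.coprime_dvd_left ⟨p ^ 2, by rw [hmm]; ring⟩ hcop
        have hcnorm : c.norm = ((m' * n : ℕ) : ℤ) := by
          have h1 : ((p:ℤ))^2 * c.norm = ((m*n:ℕ):ℤ) := by
            rw [← hz, hc, Zsqrtd.norm_mul]
            rw [show ((p:R2)) = ((p:ℕ):R2) from rfl, Zsqrtd.norm_natCast]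
            ring
          have h2 : ((p:ℤ))^2 * c.norm = ((p:ℤ))^2 * ((m'*n:ℕ):ℤ) := by
            rw [h1, hmm]; push_cast; ring
          have hppos : (0:ℤ) < (p:ℤ) := by exact_mod_cast hp.pos
          have hp0 : ((p:ℤ))^2 ≠ 0 := by positivity
          exact mul_left_cancel₀ hp0 h2
        obtain ⟨u', v', hc', hu', hv'⟩ := ih m' hm'lt hcop' hcnorm
        refine ⟨(p:R2) * u', v', by rw [hc, hc', mul_assoc], ?_, hv'⟩
        rw [Zsqrtd.norm_mul, show ((p:R2)) = ((p:ℕ):R2) from rfl, Zsqrtd.norm_natCast, hu', hmm]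
        push_cast; ring
      · -- π of norm p divides z
        set m' := m / p with hm'_def
        have hmm : m = p * m' := (Nat.mul_div_cancel' hpm).symm
        have hp2 : 2 ≤ p := hp.two_le
        have hm'pos : 0 < m' := by
          rcases Nat.eq_zero_or_pos m' with h | h
          · rw [h, Nat.mul_zero] at hmm; omega
          · exact h
        have hm'lt : m' < m := by nlinarith
        have hcop' : Nat.Coprime m' n := Nat.Coprime.coprime_dvd_left ⟨p, by rw [hmm]; ring⟩ hcop
        have hwnorm : w.norm = ((m' * n : ℕ) : ℤ) := by
          have h1 : (p:ℤ) * w.norm = ((m*n:ℕ):ℤ) := by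
            rw [← hz, hw, Zsqrtd.norm_mul, hπn]
          have h2 : (p:ℤ) * w.norm = (p:ℤ) * ((m'*n:ℕ):ℤ) := by
            rw [h1, hmm]; push_cast; ring
          have hp0 : ((p:ℤ)) ≠ 0 := by
            have hppos : (0:ℤ) < (p:ℤ) := by exact_mod_cast hp.pos
            omega
          exact mul_left_cancel₀ hp0 h2
        obtain ⟨u', v', hc', hu', hv'⟩ := ih m' hm'lt hcop' hwnorm
        refine ⟨π * u', v', by rw [hw, hc', mul_assoc], ?_, hv'⟩
        rw [Zsqrtd.norm_mul, hπn, hu', hmm]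
        push_cast; ring


theorem factor_unique {m n : ℕ} (hm : 1 ≤ m) (hn : 1 ≤ n) (h : Nat.Coprime m n)
    {u v u' v' : R2} (hu : u.norm = (m:ℤ)) (hv : v.norm = (n:ℤ)) (hu' : u'.norm = (m:ℤ))
    (hv' : v'.norm = (n:ℤ)) (heq : u' * v' = u * v) :
    (u' = u ∧ v' = v) ∨ (u' = -u ∧ v' = -v) := by
  classical
  have hu0 : u ≠ 0 := fun h0 => by rw [h0, Zsqrtd.norm_zero] at hu; omega
  have hu'0 : u' ≠ 0 := fun h0 => by rw [h0, Zsqrtd.norm_zero] at hu'; omega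
  have hcop : IsCoprime u' v := by
    rw [← EuclideanDomain.gcd_isUnit_iff]
    set g := EuclideanDomain.gcd u' v with hg
    have h1 : g.norm ∣ (m:ℤ) := hu' ▸ norm_dvd_norm (EuclideanDomain.gcd_dvd_left _ _)
    have h2 : g.norm ∣ (n:ℤ) := hv ▸ norm_dvd_norm (EuclideanDomain.gcd_dvd_right _ _)
    have h1' : g.norm.natAbs ∣ m := by
      have := Int.natAbs_dvd_natAbs.2 h1; simpa using this
    have h2' : g.norm.natAbs ∣ n := by
      have := Int.natAbs_dvd_natAbs.2 h2; simpa using this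
    have : g.norm.natAbs ∣ 1 := h ▸ Nat.dvd_gcd h1' h2'
    exact Zsqrtd.norm_eq_one_iff.1 (Nat.dvd_one.1 this)
  have hd : u' ∣ u * v := heq ▸ Dvd.intro v' rfl
  obtain ⟨w, hw⟩ := hcop.dvd_of_dvd_mul_right hd
  have hwnorm : w.norm = 1 := by
    have h1 : u.norm = u'.norm * w.norm := by rw [hw, Zsqrtd.norm_mul]
    rw [hu, hu'] at h1
    have hm0 : (m:ℤ) ≠ 0 := by
      have : (0:ℤ) < m := by exact_mod_cast hm
      omega
    have h2 : (m:ℤ) * 1 = (m:ℤ) * w.norm := by rw [mul_one]; exact h1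
    exact (mul_left_cancel₀ hm0 h2).symm
  rcases norm_eq_one_iff''.1 hwnorm with rfl | rfl
  · rw [mul_one] at hw
    left
    refine ⟨hw.symm, ?_⟩
    rw [← hw] at heq
    exact mul_left_cancel₀ hu0 heq
  · rw [mul_neg_one] at hw
    right
    have hu'eq : u' = -u := by rw [hw, neg_neg]
    refine ⟨hu'eq, ?_⟩
    rw [hu'eq] at heq
    have : u * (-v') = u * v := by rw [← heq]; ring
    have := mul_left_cancel₀ hu0 this
    rw [← this, neg_neg]

theorem fiber_eq {m n : ℕ} (hm : 1 ≤ m) (hn : 1 ≤ n) (h : Nat.Coprime m n)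
    {u v : R2} (hu : u.norm = (m:ℤ)) (hv : v.norm = (n:ℤ)) :
    ((sols m ×ˢ sols n).filter fun q => q.1 * q.2 = u * v)
      = ({(u, v), (-u, -v)} : Finset (R2 × R2)) := by
  ext q
  simp only [Finset.mem_filter, Finset.mem_product, mem_sols, Finset.mem_insert,
    Finset.mem_singleton]
  constructor
  · rintro ⟨⟨h1, h2⟩, h3⟩
    rcases factor_unique hm hn h hu hv h1 h2 h3 with ⟨ha, hb⟩ | ⟨ha, hb⟩
    · left; exact Prod.ext ha hb
    · right; exact Prod.ext ha hb
  · rintro (rfl | rfl)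
    · exact ⟨⟨hu, hv⟩, rfl⟩
    · refine ⟨⟨?_, ?_⟩, by ring⟩
      · rw [Zsqrtd.norm_neg, hu]
      · rw [Zsqrtd.norm_neg, hv]

theorem card_sols_mul {m n : ℕ} (hm : 1 ≤ m) (hn : 1 ≤ n) (h : Nat.Coprime m n) :
    (sols m).card * (sols n).card = 2 * (sols (m * n)).card := by
  classical
  have hmap : ∀ q ∈ sols m ×ˢ sols n, q.1 * q.2 ∈ sols (m * n) := by
    rintro ⟨a, b⟩ hq
    rw [Finset.mem_product] at hq
    rw [mem_sols, Zsqrtd.norm_mul, mem_sols.1 hq.1, mem_sols.1 hq.2]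
    push_cast; ring
  rw [← Finset.card_product]
  rw [Finset.card_eq_sum_card_fiberwise hmap]
  rw [Finset.sum_congr rfl (fun z hz => ?_), Finset.sum_const, smul_eq_mul, mul_comm]
  have hznorm : z.norm = ((m * n : ℕ) : ℤ) := mem_sols.1 hz
  obtain ⟨u, v, rfl, hu, hv⟩ := exists_factor m h hznorm
  rw [fiber_eq hm hn h hu hv]
  have hu0 : u ≠ 0 := fun h0 => by
    rw [h0, Zsqrtd.norm_zero] at hu; omega
  rw [Finset.card_insert_of_notMem, Finset.card_singleton]
  simp only [Finset.mem_singleton, Prod.mk.injEq, not_and]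
  intro h1
  exfalso
  apply hu0
  have hre : u.re = -u.re := congrArg Zsqrtd.re h1
  have him : u.im = -u.im := congrArg Zsqrtd.im h1
  ext
  · simp only [Zsqrtd.re_zero]; omega
  · simp only [Zsqrtd.im_zero]; omega


theorem norm_pow (z : R2) (k : ℕ) : (z ^ k).norm = z.norm ^ k := by
  induction k with
  | zero => simp [Zsqrtd.norm_one]
  | succ k ih => rw [pow_succ, pow_succ, Zsqrtd.norm_mul, ih]

theorem prime_dvd_or {π z : R2} (hπ : Prime π) (h : π ∣ ((z.norm : ℤ) : R2)) :
    π ∣ z ∨ star π ∣ z := by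
  have h2 : π ∣ z * star z := by rw [← Zsqrtd.norm_eq_mul_conj]; exact h
  rcases hπ.2.2 _ _ h2 with h1 | h1
  · left; exact h1
  · right; exact star_dvd h1

/-- No element of norm `p` when `p % 8 = 5` or `p % 8 = 7`. -/
theorem no_norm_eq_inert {p : ℕ} (hp : p.Prime) (h8 : p % 8 = 5 ∨ p % 8 = 7)
    (z : R2) (hz : z.norm = (p : ℤ)) : False := by
  haveI : Fact p.Prime := ⟨hp⟩
  have hp2 : p ≠ 2 := by omega
  rw [norm_def'] at hz
  have hple : (2:ℕ) ≤ p := hp.two_le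
  -- z.im ≠ 0 as an integer
  have him0 : z.im ≠ 0 := by
    intro h0
    rw [h0] at hz
    simp at hz
    -- z.re ^ 2 = p, impossible for prime p
    have ha : z.re.natAbs ^ 2 = p := by
      have := congrArg Int.natAbs hz
      rwa [Int.natAbs_pow, Int.natAbs_natCast] at this
    have hd : z.re.natAbs ∣ p := ⟨z.re.natAbs, by rw [← ha]; ring⟩
    rcases hp.eq_one_or_self_of_dvd _ hd with h1 | h1
    · rw [h1] at ha; omega
    · rw [h1] at ha; nlinarith
  -- pass to ZMod p
  have himp : ((z.im : ZMod p)) ≠ 0 := by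
    intro h0
    have hdvd : (p:ℤ) ∣ z.im := (ZMod.intCast_zmod_eq_zero_iff_dvd z.im p).1 h0
    have habs : z.im ^ 2 < (p:ℤ) ^ 2 := by nlinarith [sq_nonneg z.re, sq_nonneg z.im]
    have hppos : (0:ℤ) < (p:ℤ) := by exact_mod_cast hp.pos
    rcases hdvd with ⟨c, hc⟩
    have hc2 : z.im ^ 2 = (p:ℤ)^2 * c^2 := by rw [hc]; ring
    have hclt : c ^ 2 < 1 := by nlinarith [sq_nonneg c]
    have hc0 : c ^ 2 = 0 := le_antisymm (by omega) (sq_nonneg c)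
    have : c = 0 := by
      have := pow_eq_zero_iff (n := 2) (by norm_num) |>.1 hc0
      exact this
    apply him0
    rw [hc, this, mul_zero]
  have hsq : ((z.re : ZMod p)) ^ 2 + 2 * ((z.im : ZMod p)) ^ 2 = 0 := by
    have := congrArg (fun t : ℤ => (t : ZMod p)) hz
    push_cast at this
    rw [this]
    simp [ZMod.natCast_self]
  have hs : IsSquare (-2 : ZMod p) := by
    refine ⟨(z.re : ZMod p) * ((z.im : ZMod p))⁻¹, ?_⟩
    have hinv : ((z.im : ZMod p)) * ((z.im : ZMod p))⁻¹ = 1 := ZMod.mul_inv_of_unit _ (Ne.isUnit himp)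
    have hre2 : ((z.re : ZMod p)) ^ 2 = -2 * ((z.im : ZMod p)) ^ 2 := by linear_combination hsq
    field_simp
    linear_combination (-1 : ZMod p) * hsq
  rw [ZMod.exists_sq_eq_neg_two_iff hp2] at hs
  omega

theorem sols_inert {p : ℕ} (hp : p.Prime) (h8 : p % 8 = 5 ∨ p % 8 = 7) (k : ℕ) {z : R2}
    (hz : z.norm = ((p : ℤ)) ^ k) : ∃ j, k = 2 * j ∧ (z = ((p:ℕ) : R2) ^ j ∨ z = -((p:ℕ) : R2) ^ j) := by
  induction k using Nat.strong_induction_on generalizing z with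
  | _ k ih =>
    rcases Nat.eq_zero_or_pos k with rfl | hk0
    · refine ⟨0, rfl, ?_⟩
      rw [pow_zero] at hz
      rcases norm_eq_one_iff''.1 hz with h1 | h1
      · left; rw [h1, pow_zero]
      · right; rw [h1, pow_zero]
    · have hpz : (p : ℤ) ∣ z.norm := by
        rw [hz]
        exact dvd_pow_self _ (by omega)
      rcases exists_prime_divisor hp hpz with ⟨hpp, c, hc⟩ | ⟨π, hπn, hπp, w, hw⟩
      · -- z = p * c
        have hnormc : (p:ℤ)^2 * c.norm = (p:ℤ)^k := by
          rw [← hz, hc, Zsqrtd.norm_mul, Zsqrtd.norm_natCast]; ring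
        have hk2 : 2 ≤ k := by
          by_contra hk1
          have hk : k = 1 := by omega
          rw [hk, pow_one] at hnormc
          have h1 : (p:ℤ) * ((p:ℤ) * c.norm) = (p:ℤ) * 1 := by rw [mul_one]; linear_combination hnormc
          have hp0 : (p:ℤ) ≠ 0 := by exact_mod_cast hp.ne_zero
          have h2 := mul_left_cancel₀ hp0 h1
          have : (p:ℤ) ∣ 1 := ⟨c.norm, h2.symm⟩
          have := Int.le_of_dvd one_pos this
          have : (2:ℤ) ≤ p := by exact_mod_cast hp.two_le
          omega
        have hnormc' : c.norm = (p:ℤ)^(k-2) := by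
          have hp0 : ((p:ℤ))^2 ≠ 0 := by
            have : (0:ℤ) < p := by exact_mod_cast hp.pos
            positivity
          apply mul_left_cancel₀ hp0
          rw [hnormc, ← pow_add]
          congr 1
          omega
        obtain ⟨j, hj, hc'⟩ := ih (k-2) (by omega) hnormc'
        refine ⟨j + 1, by omega, ?_⟩
        rcases hc' with h1 | h1
        · left; rw [hc, h1, pow_succ]; ring
        · right; rw [hc, h1, pow_succ]; ring
      · exact absurd hπn.symm.symm (fun h => no_norm_eq_inert hp h8 π hπn)

theorem card_sols_inert {p : ℕ} (hp : p.Prime) (h8 : p % 8 = 5 ∨ p % 8 = 7) (k : ℕ) :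
    (sols (p ^ k)).card = if Even k then 2 else 0 := by
  by_cases hk : Even k
  · obtain ⟨j, rfl⟩ := hk
    have hjj : j + j = 2 * j := by ring
    rw [if_pos (by exact ⟨j, rfl⟩)]
    have : sols (p ^ (j + j)) = ({((p:ℕ):R2) ^ j, -((p:ℕ):R2) ^ j} : Finset R2) := by
      ext z
      rw [mem_sols]
      constructor
      · intro h
        obtain ⟨j', hj', hz⟩ := sols_inert hp h8 (j+j) (by rw [h]; push_cast; ring)
        have : j' = j := by omega
        subst this
        simp only [Finset.mem_insert, Finset.mem_singleton]
        exact hz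
      · intro h
        simp only [Finset.mem_insert, Finset.mem_singleton] at h
        rcases h with rfl | rfl
        · rw [norm_pow, Zsqrtd.norm_natCast]
          push_cast; ring
        · rw [Zsqrtd.norm_neg, norm_pow, Zsqrtd.norm_natCast]
          push_cast; ring
    rw [this]
    rw [Finset.card_insert_of_notMem, Finset.card_singleton]
    simp only [Finset.mem_singleton]
    intro h
    have hp0 : (((p:ℕ):R2)) ^ j ≠ 0 := by
      apply pow_ne_zero
      intro h0
      have := congrArg Zsqrtd.re h0
      simp at this
      exact hp.ne_zero this
    have hre : (((p:ℕ):R2) ^ j).re = -(((p:ℕ):R2) ^ j).re := congrArg Zsqrtd.re h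
    have him : (((p:ℕ):R2) ^ j).im = -(((p:ℕ):R2) ^ j).im := congrArg Zsqrtd.im h
    apply hp0
    ext
    · simp only [Zsqrtd.re_zero]; omega
    · simp only [Zsqrtd.im_zero]; omega
  · rw [if_neg hk]
    rw [Finset.card_eq_zero]
    ext z
    simp only [Finset.notMem_empty, iff_false]
    intro h
    obtain ⟨j, hj, _⟩ := sols_inert hp h8 k (by rw [mem_sols.1 h]; push_cast; ring)
    exact hk ⟨j, by omega⟩


/-- the square root of -2 -/
def sq2 : R2 := ⟨0, 1⟩

theorem sq2_norm : sq2.norm = 2 := by rw [norm_def']; rfl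

theorem sq2_prime : Prime sq2 := prime_of_norm_prime (by rw [sq2_norm]; exact Int.prime_two)

theorem sq2_mul_neg : sq2 * (-sq2) = ((2:ℤ) : R2) := by ext <;> simp [sq2, Zsqrtd.re_mul, Zsqrtd.im_mul]

theorem sols_two (k : ℕ) : ∀ {z : R2}, z.norm = 2 ^ k → z = sq2 ^ k ∨ z = -sq2 ^ k := by
  induction k with
  | zero =>
    intro z hz
    rw [pow_zero] at hz
    simpa [pow_zero] using norm_eq_one_iff''.1 hz
  | succ k ih =>
    intro z hz
    have hdvd : sq2 ∣ ((z.norm : ℤ) : R2) := by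
      rw [hz]
      refine dvd_trans ⟨-sq2, sq2_mul_neg.symm⟩ ?_
      push_cast
      exact dvd_pow_self _ (Nat.succ_ne_zero k)
    have hsq2z : sq2 ∣ z := by
      rcases prime_dvd_or sq2_prime hdvd with h1 | h1
      · exact h1
      · have : star sq2 = -sq2 := by ext <;> simp [sq2]
        rw [this] at h1
        exact neg_dvd.1 h1
    obtain ⟨c, hc⟩ := hsq2z
    have hcn : c.norm = 2 ^ k := by
      have h1 : sq2.norm * c.norm = 2 ^ (k+1) := by rw [← Zsqrtd.norm_mul, ← hc, hz]
      rw [sq2_norm] at h1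
      have h2 : (2:ℤ) * c.norm = 2 * 2 ^ k := by rw [h1, pow_succ]; ring
      exact mul_left_cancel₀ (by norm_num) h2
    rcases ih hcn with h1 | h1
    · left; rw [hc, h1, pow_succ]; ring
    · right; rw [hc, h1, pow_succ]; ring

theorem card_sols_two (k : ℕ) : (sols (2 ^ k)).card = 2 := by
  have h0 : sq2 ^ k ≠ 0 := pow_ne_zero _ (by intro h; exact one_ne_zero (congrArg Zsqrtd.im h))
  have : sols (2 ^ k) = ({sq2 ^ k, -sq2 ^ k} : Finset R2) := by
    ext z
    rw [mem_sols]
    simp only [Finset.mem_insert, Finset.mem_singleton]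
    constructor
    · intro h
      exact sols_two k (by rw [h]; push_cast; ring)
    · rintro (rfl | rfl)
      · rw [norm_pow, sq2_norm]; push_cast; ring
      · rw [Zsqrtd.norm_neg, norm_pow, sq2_norm]; push_cast; ring
  rw [this, Finset.card_insert_of_notMem, Finset.card_singleton]
  simp only [Finset.mem_singleton]
  intro h
  apply h0
  have hre : (sq2 ^ k).re = -(sq2 ^ k).re := congrArg Zsqrtd.re h
  have him : (sq2 ^ k).im = -(sq2 ^ k).im := congrArg Zsqrtd.im h
  ext
  · simp only [Zsqrtd.re_zero]; omega
  · simp only [Zsqrtd.im_zero]; omega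

theorem not_sq_of_prime {p : ℕ} (hp : p.Prime) (a : ℤ) (h : a ^ 2 = (p:ℤ)) : False := by
  have ha : a.natAbs ^ 2 = p := by
    have := congrArg Int.natAbs h
    rwa [Int.natAbs_pow, Int.natAbs_natCast] at this
  have hd : a.natAbs ∣ p := ⟨a.natAbs, by rw [← ha]; ring⟩
  have h2 := hp.two_le
  rcases hp.eq_one_or_self_of_dvd _ hd with h1 | h1
  · rw [h1] at ha; omega
  · rw [h1] at ha; nlinarith

theorem star_not_dvd {p : ℕ} (hp : p.Prime) (hodd : p % 2 = 1) {π : R2}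
    (hπn : π.norm = (p:ℤ)) : ¬ π ∣ star π := by
  intro hdvd
  obtain ⟨u, hu⟩ := hdvd
  have hp0 : (p:ℤ) ≠ 0 := by
    have : (0:ℤ) < p := by exact_mod_cast hp.pos
    omega
  have hun : u.norm = 1 := by
    have h1 : π.norm * u.norm = π.norm := by
      rw [← Zsqrtd.norm_mul, ← hu, Zsqrtd.norm_conj]
    rw [hπn] at h1
    have h2 : (p:ℤ) * u.norm = (p:ℤ) * 1 := by rw [mul_one]; exact h1
    exact mul_left_cancel₀ hp0 h2
  rcases norm_eq_one_iff''.1 hun with rfl | rfl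
  · rw [mul_one] at hu
    have him : -π.im = π.im := congrArg Zsqrtd.im hu
    have him0 : π.im = 0 := by omega
    rw [norm_def', him0] at hπn
    exact not_sq_of_prime hp π.re (by linarith [hπn])
  · rw [mul_neg_one] at hu
    have h2 := congrArg Zsqrtd.re hu
    simp at h2
    have hre0 : π.re = 0 := by omega
    rw [norm_def', hre0] at hπn
    have : (2:ℤ) ∣ (p:ℤ) := ⟨π.im ^ 2, by linarith⟩
    have : (2:ℕ) ∣ p := by exact_mod_cast this
    omega

theorem sols_split {p : ℕ} (hp : p.Prime) {π : R2} (hπn : π.norm = (p:ℤ)) (k : ℕ) :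
    ∀ {z : R2}, z.norm = (p:ℤ) ^ k →
      ∃ i, i ≤ k ∧ (z = π ^ i * (star π) ^ (k - i) ∨ z = -(π ^ i * (star π) ^ (k - i))) := by
  have hπp : Prime π := prime_of_norm_prime (by rw [hπn]; exact Nat.prime_iff_prime_int.1 hp)
  have hπsp : Prime (star π) :=
    prime_of_norm_prime (by rw [Zsqrtd.norm_conj, hπn]; exact Nat.prime_iff_prime_int.1 hp)
  have hp0 : (p:ℤ) ≠ 0 := by
    have : (0:ℤ) < p := by exact_mod_cast hp.pos
    omega
  induction k with
  | zero =>
    intro z hz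
    rw [pow_zero] at hz
    rcases norm_eq_one_iff''.1 hz with rfl | rfl
    · exact ⟨0, le_refl 0, Or.inl (by simp)⟩
    · exact ⟨0, le_refl 0, Or.inr (by simp)⟩
  | succ k ih =>
    intro z hz
    have hdvd : π ∣ ((z.norm : ℤ) : R2) := by
      rw [hz]
      have h1 : π ∣ ((p:ℤ) : R2) := by
        refine ⟨star π, ?_⟩
        have := Zsqrtd.norm_eq_mul_conj π
        rw [hπn] at this
        exact this
      refine dvd_trans h1 ?_
      push_cast
      exact dvd_pow_self _ (Nat.succ_ne_zero k)
    rcases prime_dvd_or hπp hdvd with h1 | h1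
    · obtain ⟨c, hc⟩ := h1
      have hcn : c.norm = (p:ℤ) ^ k := by
        have h1 : π.norm * c.norm = (p:ℤ) ^ (k+1) := by rw [← Zsqrtd.norm_mul, ← hc, hz]
        rw [hπn] at h1
        have h2 : (p:ℤ) * c.norm = (p:ℤ) * (p:ℤ) ^ k := by rw [h1, pow_succ]; ring
        exact mul_left_cancel₀ hp0 h2
      obtain ⟨i, hik, hcase⟩ := ih hcn
      refine ⟨i + 1, by omega, ?_⟩
      have hexp : k + 1 - (i + 1) = k - i := by omega
      rcases hcase with h2 | h2
      · left; rw [hc, h2, hexp, pow_succ]; ring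
      · right; rw [hc, h2, hexp, pow_succ]; ring
    · obtain ⟨c, hc⟩ := h1
      have hcn : c.norm = (p:ℤ) ^ k := by
        have h1 : (star π).norm * c.norm = (p:ℤ) ^ (k+1) := by rw [← Zsqrtd.norm_mul, ← hc, hz]
        rw [Zsqrtd.norm_conj, hπn] at h1
        have h2 : (p:ℤ) * c.norm = (p:ℤ) * (p:ℤ) ^ k := by rw [h1, pow_succ]; ring
        exact mul_left_cancel₀ hp0 h2
      obtain ⟨i, hik, hcase⟩ := ih hcn
      refine ⟨i, by omega, ?_⟩
      have hexp : k + 1 - i = (k - i) + 1 := by omega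
      rcases hcase with h2 | h2
      · left; rw [hc, h2, hexp, pow_succ]; ring
      · right; rw [hc, h2, hexp, pow_succ]; ring

theorem split_eq_aux {p : ℕ} (hp : p.Prime) (hodd : p % 2 = 1) {π : R2}
    (hπn : π.norm = (p:ℤ)) {k i j : ℕ} (hi : i ≤ k) (hj : j ≤ k) {ε : R2}
    (hε : ε = 1 ∨ ε = -1)
    (heq : π ^ i * (star π) ^ (k - i) = ε * (π ^ j * (star π) ^ (k - j))) :
    i = j ∧ ε = 1 := by
  have hπp : Prime π := prime_of_norm_prime (by rw [hπn]; exact Nat.prime_iff_prime_int.1 hp)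
  have hns : ¬ π ∣ star π := star_not_dvd hp hodd hπn
  have hπ0 : π ≠ 0 := fun h => by rw [h, Zsqrtd.norm_zero] at hπn; have := hp.pos; omega
  have hsπ0 : star π ≠ 0 := fun h => by
    rw [← star_star π, h, star_zero] at hπ0
    exact hπ0 rfl
  have hij : i = j := by
    by_contra hne
    rcases Nat.lt_or_ge i j with hlt | hge
    · -- i < j : cancel π^i and (star π)^(k-j)
      have hkey : π ^ i * ((star π) ^ (k - j) * ((star π) ^ (j - i)))
          = π ^ i * ((star π) ^ (k - j) * (ε * π ^ (j - i))) := by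
        calc π ^ i * ((star π) ^ (k - j) * ((star π) ^ (j - i)))
            = π ^ i * (star π) ^ (k - i) := by
              rw [show (star π) ^ (k - i) = (star π) ^ (k - j) * (star π) ^ (j - i) from by
                rw [← pow_add]; congr 1; omega]
          _ = ε * (π ^ j * (star π) ^ (k - j)) := heq
          _ = π ^ i * ((star π) ^ (k - j) * (ε * π ^ (j - i))) := by
              rw [show π ^ j = π ^ i * π ^ (j - i) from by rw [← pow_add]; congr 1; omega]
              ring
      have h3 := mul_left_cancel₀ (pow_ne_zero i hπ0) hkey
      have h4 := mul_left_cancel₀ (pow_ne_zero (k-j) hsπ0) h3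
      -- (star π)^(j-i) = ε * π^(j-i), so π ∣ star π ^ (j-i)
      have h5 : π ∣ (star π) ^ (j - i) := by
        rw [h4]
        rcases hε with rfl | rfl
        · rw [one_mul]; exact dvd_pow_self _ (by omega)
        · exact Dvd.dvd.mul_left (dvd_pow_self _ (by omega)) _
      exact hns (hπp.dvd_of_dvd_pow h5)
    · have hlt : j < i := by omega
      have hkey : π ^ j * ((star π) ^ (k - i) * (π ^ (i - j)))
          = π ^ j * ((star π) ^ (k - i) * (ε * (star π) ^ (i - j))) := by
        calc π ^ j * ((star π) ^ (k - i) * (π ^ (i - j)))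
            = π ^ i * (star π) ^ (k - i) := by
              rw [show π ^ i = π ^ j * π ^ (i - j) from by rw [← pow_add]; congr 1; omega]
              ring
          _ = ε * (π ^ j * (star π) ^ (k - j)) := heq
          _ = π ^ j * ((star π) ^ (k - i) * (ε * (star π) ^ (i - j))) := by
              rw [show (star π) ^ (k - j) = (star π) ^ (k - i) * (star π) ^ (i - j) from by
                rw [← pow_add]; congr 1; omega]
              ring
      have h3 := mul_left_cancel₀ (pow_ne_zero j hπ0) hkey
      have h4 := mul_left_cancel₀ (pow_ne_zero (k-i) hsπ0) h3
      have h5 : π ∣ (star π) ^ (i - j) := by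
        have hd : π ∣ π ^ (i - j) := dvd_pow_self _ (by omega)
        rw [h4] at hd
        rcases hε with rfl | rfl
        · rwa [one_mul] at hd
        · rw [neg_one_mul] at hd
          exact dvd_neg.1 hd
      exact hns (hπp.dvd_of_dvd_pow h5)
  subst hij
  have h6 : π ^ i * (star π) ^ (k - i) * ε = π ^ i * (star π) ^ (k - i) * 1 := by
    rw [mul_one]
    linear_combination -heq
  refine ⟨rfl, ?_⟩
  exact mul_left_cancel₀ (mul_ne_zero (pow_ne_zero i hπ0) (pow_ne_zero (k-i) hsπ0)) h6


theorem card_sols_split {p : ℕ} (hp : p.Prime) (hodd : p % 2 = 1) {π : R2}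
    (hπn : π.norm = (p:ℤ)) (k : ℕ) : (sols (p ^ k)).card = 2 * (k + 1) := by
  classical
  have hπ0 : π ≠ 0 := fun h => by
    rw [h, Zsqrtd.norm_zero] at hπn
    have := hp.pos; omega
  set A := (Finset.range (k+1)).image (fun i => π ^ i * (star π) ^ (k - i)) with hA
  set B := A.image (fun z => -z) with hB
  have hAcard : A.card = k + 1 := by
    rw [hA, Finset.card_image_of_injOn, Finset.card_range]
    intro i hi j hj hij
    simp only [Finset.coe_range, Set.mem_Iio] at hi hj
    have heq : π ^ i * (star π) ^ (k - i) = (1:R2) * (π ^ j * (star π) ^ (k - j)) := by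
      rw [one_mul]; exact hij
    exact (split_eq_aux hp hodd hπn (show i ≤ k by omega) (show j ≤ k by omega)
      (Or.inl rfl) heq).1
  have hBcard : B.card = k + 1 := by
    rw [hB, Finset.card_image_of_injective _ neg_injective, hAcard]
  have hneg_ne : (-1 : R2) ≠ 1 := by
    intro h
    have := congrArg Zsqrtd.re h
    simp at this
  have hdisj : Disjoint A B := by
    rw [Finset.disjoint_left]
    intro x hxA hxB
    obtain ⟨i, hi, rfl⟩ := Finset.mem_image.1 hxA
    obtain ⟨y, hyA, hxy⟩ := Finset.mem_image.1 hxB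
    obtain ⟨j, hj, rfl⟩ := Finset.mem_image.1 hyA
    rw [Finset.mem_range] at hi hj
    have heq : π ^ i * (star π) ^ (k - i) = (-1:R2) * (π ^ j * (star π) ^ (k - j)) := by
      rw [← hxy]; ring
    exact hneg_ne (split_eq_aux hp hodd hπn (show i ≤ k by omega) (show j ≤ k by omega)
      (Or.inr rfl) heq).2
  have hnormx : ∀ i, i ≤ k → (π ^ i * (star π) ^ (k - i)).norm = ((p ^ k : ℕ) : ℤ) := by
    intro i hik
    rw [Zsqrtd.norm_mul, norm_pow, norm_pow, Zsqrtd.norm_conj, hπn, ← pow_add]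
    rw [show i + (k - i) = k from by omega]
    push_cast; ring
  have hsols : sols (p ^ k) = A ∪ B := by
    ext z
    rw [mem_sols, Finset.mem_union]
    constructor
    · intro h
      obtain ⟨i, hik, hcase⟩ := sols_split hp hπn k (by rw [h]; push_cast; ring)
      rcases hcase with rfl | rfl
      · left
        exact Finset.mem_image.2 ⟨i, Finset.mem_range.2 (by omega), rfl⟩
      · right
        refine Finset.mem_image.2 ⟨π ^ i * (star π) ^ (k - i), ?_, rfl⟩
        exact Finset.mem_image.2 ⟨i, Finset.mem_range.2 (by omega), rfl⟩
    · intro h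
      rcases h with h | h
      · obtain ⟨i, hi, rfl⟩ := Finset.mem_image.1 h
        exact hnormx i (by rw [Finset.mem_range] at hi; omega)
      · obtain ⟨y, hyA, rfl⟩ := Finset.mem_image.1 h
        obtain ⟨i, hi, rfl⟩ := Finset.mem_image.1 hyA
        rw [Zsqrtd.norm_neg]
        exact hnormx i (by rw [Finset.mem_range] at hi; omega)
  rw [hsols, Finset.card_union_of_disjoint hdisj, hAcard, hBcard]
  ring

theorem exists_norm_split {p : ℕ} (hp : p.Prime) (h8 : p % 8 = 1 ∨ p % 8 = 3) :
    ∃ π : R2, π.norm = (p:ℤ) := by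
  haveI : Fact p.Prime := ⟨hp⟩
  have hp2 : p ≠ 2 := by omega
  have hs : IsSquare (-2 : ZMod p) := (ZMod.exists_sq_eq_neg_two_iff hp2).2 h8
  obtain ⟨c, hc⟩ := hs
  obtain ⟨a, ha⟩ : ∃ a : ℤ, (p:ℤ) ∣ a ^ 2 + 2 := by
    refine ⟨(c.val : ℤ), ?_⟩
    rw [← ZMod.intCast_zmod_eq_zero_iff_dvd]
    push_cast
    rw [show ((c.val : ℕ) : ZMod p) = c from ZMod.natCast_rightInverse c]
    linear_combination -hc
  have hdvd := ha
  have hple : (2:ℕ) ≤ p := hp.two_le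
  have hnp : ¬ Prime ((p:ℕ) : R2) := by
    intro hpr
    have hprod : (⟨a, 1⟩ : R2) * ⟨a, -1⟩ = ⟨a ^ 2 + 2, 0⟩ := by
      ext <;> simp [Zsqrtd.re_mul, Zsqrtd.im_mul] <;> ring
    have hd2 : ((p:ℕ) : R2) ∣ (⟨a, 1⟩ : R2) * ⟨a, -1⟩ := by
      rw [hprod]
      rcases hdvd with ⟨t, ht⟩
      refine ⟨⟨t, 0⟩, ?_⟩
      ext <;>
        simp [Zsqrtd.re_mul, Zsqrtd.im_mul, Zsqrtd.re_natCast, Zsqrtd.im_natCast] <;>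
        linarith [ht]
    have himdvd : ∀ w : R2, ((p:ℕ) : R2) ∣ w → (p:ℤ) ∣ w.im := by
      intro w hw
      have : ((p:ℤ) : R2) ∣ w := by push_cast at hw ⊢; exact hw
      exact ((Zsqrtd.intCast_dvd (p:ℤ) w).1 this).2
    rcases hpr.2.2 _ _ hd2 with h | h
    · have h1 := himdvd _ h
      have h2 : (p:ℤ) ∣ 1 := by simpa using h1
      have := Int.le_of_dvd one_pos h2
      omega
    · have h1 := himdvd _ h
      have h2 : (p:ℤ) ∣ 1 := by
        have h3 : (p:ℤ) ∣ (-1 : ℤ) := by simpa using h1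
        exact dvd_neg.1 h3
      have := Int.le_of_dvd one_pos h2
      omega
  exact exists_norm_eq_of_not_prime hp hnp


def chi0 (r : ℕ) : ℤ :=
  if r = 1 ∨ r = 3 then 1 else if r = 5 ∨ r = 7 then -1 else 0

def chi (d : ℕ) : ℤ := chi0 (d % 8)

theorem chi_eqmod {a b : ℕ} (h : a % 8 = b % 8) : chi a = chi b := by
  unfold chi; rw [h]

theorem chi_mul (a b : ℕ) : chi (a * b) = chi a * chi b := by
  have key : ∀ x < 8, ∀ y < 8, chi (x * y) = chi x * chi y := by decide
  have h1 : chi (a * b) = chi ((a % 8) * (b % 8)) := chi_eqmod (Nat.mul_mod a b 8)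
  have h2 : chi (a % 8) = chi a := chi_eqmod (Nat.mod_mod_of_dvd a dvd_rfl)
  have h3 : chi (b % 8) = chi b := chi_eqmod (Nat.mod_mod_of_dvd b dvd_rfl)
  rw [h1, key _ (Nat.mod_lt _ (by norm_num)) _ (Nat.mod_lt _ (by norm_num)), h2, h3]

theorem chi_one : chi 1 = 1 := by decide

theorem chi_pow (p i : ℕ) : chi (p ^ i) = chi p ^ i := by
  induction i with
  | zero => simpa using chi_one
  | succ i ih => rw [pow_succ, pow_succ, chi_mul, ih]

noncomputable def chiA : ArithmeticFunction ℤ :=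
  ⟨fun n => if n = 0 then 0 else chi n, by simp⟩

theorem chiA_apply {n : ℕ} (hn : n ≠ 0) : chiA n = chi n := by
  show (if n = 0 then 0 else chi n) = chi n
  rw [if_neg hn]

theorem chiA_isMult : chiA.IsMultiplicative := by
  constructor
  · rw [chiA_apply one_ne_zero, chi_one]
  · intro m n hmn
    by_cases hm : m = 0
    · subst hm
      have h1 : n = 1 := (Nat.coprime_zero_left n).1 hmn
      subst h1
      rw [Nat.zero_mul, ArithmeticFunction.map_zero, zero_mul]
    by_cases hn : n = 0
    · subst hn
      have h1 : m = 1 := (Nat.coprime_zero_right m).1 hmn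
      subst h1
      rw [Nat.mul_zero, ArithmeticFunction.map_zero, mul_zero]
    rw [chiA_apply (Nat.mul_ne_zero hm hn), chiA_apply hm, chiA_apply hn, chi_mul]

noncomputable def Dsum (n : ℕ) : ℤ := ∑ d ∈ n.divisors, chi d

theorem Dsum_eq {n : ℕ} (hn : n ≠ 0) : Dsum n = (↑(ArithmeticFunction.zeta) * chiA) n := by
  rw [ArithmeticFunction.coe_zeta_mul_apply]
  exact Finset.sum_congr rfl fun d hd => (chiA_apply (Nat.pos_of_mem_divisors hd).ne').symm

theorem Dsum_one : Dsum 1 = 1 := by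
  unfold Dsum
  rw [Nat.divisors_one, Finset.sum_singleton, chi_one]

theorem Dsum_mul {a b : ℕ} (hab : Nat.Coprime a b) (ha : a ≠ 0) (hb : b ≠ 0) :
    Dsum (a * b) = Dsum a * Dsum b := by
  rw [Dsum_eq (Nat.mul_ne_zero ha hb), Dsum_eq ha, Dsum_eq hb]
  exact (ArithmeticFunction.isMultiplicative_zeta.natCast.mul chiA_isMult).map_mul_of_coprime hab

theorem Dsum_prime_pow {p : ℕ} (hp : p.Prime) (k : ℕ) :
    Dsum (p ^ k) = ∑ i ∈ Finset.range (k + 1), chi p ^ i := by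
  unfold Dsum
  rw [Nat.sum_divisors_prime_pow hp]
  exact Finset.sum_congr rfl fun i _ => chi_pow p i

theorem sum_zero_pow (k : ℕ) : ∑ i ∈ Finset.range (k + 1), (0:ℤ) ^ i = 1 := by
  induction k with
  | zero => simp
  | succ k ih =>
    rw [Finset.sum_range_succ, ih, zero_pow (Nat.succ_ne_zero k)]
    ring

theorem main_card : ∀ n : ℕ, 1 ≤ n → ((sols n).card : ℤ) = 2 * Dsum n := by
  intro n
  induction n using Nat.recOnPosPrimePosCoprime with
  | prime_pow p k hpp hk =>
    intro _
    have hpn : p.Prime := hpp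
    by_cases hp2 : p = 2
    · subst hp2
      rw [card_sols_two, Dsum_prime_pow hpn, show chi 2 = 0 from by decide, sum_zero_pow]
      norm_num
    · have hodd : p % 2 = 1 := Nat.odd_iff.1 (hpn.odd_of_ne_two hp2)
      by_cases h13 : p % 8 = 1 ∨ p % 8 = 3
      · obtain ⟨π, hπ⟩ := exists_norm_split hpn h13
        rw [card_sols_split hpn hodd hπ k, Dsum_prime_pow hpn,
          show chi p = 1 from by unfold chi chi0; rw [if_pos h13]]
        simp only [one_pow, Finset.sum_const, Finset.card_range, smul_eq_mul, mul_one]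
        push_cast; ring
      · have h57 : p % 8 = 5 ∨ p % 8 = 7 := by omega
        rw [card_sols_inert hpn h57 k, Dsum_prime_pow hpn,
          show chi p = -1 from by
            unfold chi chi0
            rw [if_neg (by omega), if_pos h57],
          neg_one_geom_sum]
        rcases Nat.even_or_odd k with he | ho
        · have hk2 : k % 2 = 0 := Nat.even_iff.1 he
          rw [if_pos he, if_neg (by rw [Nat.even_iff]; omega)]
          norm_num
        · have hk2 : k % 2 = 1 := Nat.odd_iff.1 ho
          rw [if_neg (by rw [Nat.even_iff]; omega), if_pos (by rw [Nat.even_iff]; omega)]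
          norm_num
  | zero => intro h; omega
  | one =>
    intro _
    rw [card_sols_one, Dsum_one]
    norm_num
  | coprime a b ha hb hab iha ihb =>
    intro _
    have h2 := card_sols_mul (by omega) (by omega) hab
    have hDa := iha (by omega)
    have hDb := ihb (by omega)
    have hD := Dsum_mul hab (by omega) (by omega)
    have h2' : ((sols a).card : ℤ) * ((sols b).card : ℤ) = 2 * ((sols (a * b)).card : ℤ) := by
      exact_mod_cast h2
    rw [hDa, hDb] at h2'
    rw [hD]
    linarith

end Z2

theorem stmt_1 (n : ℕ) (hn : 1 ≤ n) :
    ({p : ℤ × ℤ | p.1 ^ 2 + 2 * p.2 ^ 2 = (n : ℤ)}.ncard : ℤ) =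
      2 * (((n.divisors.filter (fun d => d % 8 = 1)).card : ℤ) +
           ((n.divisors.filter (fun d => d % 8 = 3)).card : ℤ) -
           ((n.divisors.filter (fun d => d % 8 = 5)).card : ℤ) -
           ((n.divisors.filter (fun d => d % 8 = 7)).card : ℤ)) := by
  classical
  have hinj : Function.Injective (fun z : R2 => (z.re, z.im)) := by
    intro a b h
    have h1 : a.re = b.re := congrArg Prod.fst h
    have h2 : a.im = b.im := congrArg Prod.snd h
    ext <;> assumption
  have hset : {p : ℤ × ℤ | p.1 ^ 2 + 2 * p.2 ^ 2 = (n : ℤ)}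
      = ↑((Z2.sols n).image fun z => (z.re, z.im)) := by
    ext q
    simp only [Set.mem_setOf_eq, Finset.coe_image, Set.mem_image, Finset.mem_coe, Z2.mem_sols]
    constructor
    · intro h
      refine ⟨⟨q.1, q.2⟩, ?_, ?_⟩
      · rw [Z2.norm_def']; exact h
      · exact Prod.mk.eta
    · rintro ⟨z, hz, rfl⟩
      show z.re ^ 2 + 2 * z.im ^ 2 = (n : ℤ)
      rw [← Z2.norm_def']; exact hz
  rw [hset, Set.ncard_coe_finset, Finset.card_image_of_injective _ hinj]
  rw [Z2.main_card n hn]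
  congr 1
  unfold Z2.Dsum
  have hpt : ∀ d : ℕ, Z2.chi d = (if d % 8 = 1 then (1:ℤ) else 0) + (if d % 8 = 3 then 1 else 0)
      - (if d % 8 = 5 then 1 else 0) - (if d % 8 = 7 then 1 else 0) := by
    intro d
    have h8 : d % 8 < 8 := Nat.mod_lt _ (by norm_num)
    have key : ∀ r < 8, Z2.chi0 r = (if r = 1 then (1:ℤ) else 0) + (if r = 3 then 1 else 0)
        - (if r = 5 then 1 else 0) - (if r = 7 then 1 else 0) := by decide
    exact key _ h8
  rw [Finset.sum_congr rfl fun d _ => hpt d]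
  rw [Finset.sum_sub_distrib, Finset.sum_sub_distrib, Finset.sum_add_distrib]
  rw [Finset.sum_boole, Finset.sum_boole, Finset.sum_boole, Finset.sum_boole]
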